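/- There exists a constant C > 0 such that for every n ≥ 2 there is a polynomial P* in 2n real variables of total degree at most C · n⁶ with the following property: for every sequence of n pairwise distinct points in ℝ² (viewed as a point of ℝ^{2n}), the sequence is non-simple (its super-order type contains a zero) if and only if P* vanishes at that point. -/

import Mathlib

/-- Cross product of two planar vectors. -/
def cross (u v : ℝ × ℝ) : ℝ := u.1 * v.2 - u.2 * v.1

/-- The line through `p` and `q`, as a set of points. -/
def lineThrough (p q : ℝ × ℝ) : Set (ℝ × ℝ) := {x | ∃ t : ℝ, x = p + t • (q - p)}

/-- A sextuple of points is degenerate if one of the three lines `A = a₁a₂`,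
`B = b₁b₂`, `C = c₁c₂` is vertical, or `A` is parallel to `B` or to `C`,
or `A`, `B`, `C` pass through a common point. -/
def IsDegenerate (a₁ a₂ b₁ b₂ c₁ c₂ : ℝ × ℝ) : Prop :=
  a₁.1 = a₂.1 ∨ b₁.1 = b₂.1 ∨ c₁.1 = c₂.1 ∨
  cross (a₂ - a₁) (b₂ - b₁) = 0 ∨ cross (a₂ - a₁) (c₂ - c₁) = 0 ∨
  ∃ p : ℝ × ℝ, p ∈ lineThrough a₁ a₂ ∧ p ∈ lineThrough b₁ b₂ ∧ p ∈ lineThrough c₁ c₂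

/-- The parameter `t` such that `a₁ + t • (a₂ - a₁)` is the intersection of the
line through `a₁, a₂` with the line through `b₁, b₂` (when the lines are not
parallel). -/
noncomputable def interParam (a₁ a₂ b₁ b₂ : ℝ × ℝ) : ℝ :=
  cross (b₁ - a₁) (b₂ - b₁) / cross (a₂ - a₁) (b₂ - b₁)

/-- The type `σ(T)` of a sextuple of points: `0` if degenerate, `-1` if `A ∩ B`
comes before `A ∩ C` along the direction of `A`, and `+1` otherwise. -/
noncomputable def sextType (a₁ a₂ b₁ b₂ c₁ c₂ : ℝ × ℝ) : ℤ :=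
  open Classical in
  if IsDegenerate a₁ a₂ b₁ b₂ c₁ c₂ then 0
  else if interParam a₁ a₂ b₁ b₂ < interParam a₁ a₂ c₁ c₂ then -1 else 1

/-- A sextuple of indices is admissible: the three pairs consist of distinct
indices, are pairwise distinct as unordered pairs, and have empty common
intersection. -/
def AdmissibleIdx {n : ℕ} (i₁ i₂ j₁ j₂ k₁ k₂ : Fin n) : Prop :=
  i₁ ≠ i₂ ∧ j₁ ≠ j₂ ∧ k₁ ≠ k₂ ∧
  ({i₁, i₂} : Finset (Fin n)) ≠ {j₁, j₂} ∧
  ({j₁, j₂} : Finset (Fin n)) ≠ {k₁, k₂} ∧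
  ({k₁, k₂} : Finset (Fin n)) ≠ {i₁, i₂} ∧
  ({i₁, i₂} ∩ {j₁, j₂} ∩ {k₁, k₂} : Finset (Fin n)) = ∅

/-- The super-order type of a point sequence `P`: the family of types of all
sextuples of points indexed by admissible index sextuples (non-admissible
index sextuples are mapped to `0`). -/
noncomputable def superOrderType {n : ℕ} (P : Fin n → ℝ × ℝ) :
    Fin n × Fin n × Fin n × Fin n × Fin n × Fin n → ℤ :=
  open Classical in
  fun t =>
    if AdmissibleIdx t.1 t.2.1 t.2.2.1 t.2.2.2.1 t.2.2.2.2.1 t.2.2.2.2.2 then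
      sextType (P t.1) (P t.2.1) (P t.2.2.1) (P t.2.2.2.1) (P t.2.2.2.2.1) (P t.2.2.2.2.2)
    else 0

/-- A sequence of distinct points is simple if its super-order type contains
no zeros. -/
def IsSimpleSeq {n : ℕ} (P : Fin n → ℝ × ℝ) : Prop :=
  Function.Injective P ∧
  ∀ i₁ i₂ j₁ j₂ k₁ k₂ : Fin n, AdmissibleIdx i₁ i₂ j₁ j₂ k₁ k₂ →
    sextType (P i₁) (P i₂) (P j₁) (P j₂) (P k₁) (P k₂) ≠ 0


/-! ### Auxiliary machinery -/

/-- The explicit real expression whose vanishing characterises degeneracy. -/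
noncomputable def Eexpr (a₁ a₂ b₁ b₂ c₁ c₂ : ℝ × ℝ) : ℝ :=
  (a₂.1 - a₁.1) * (b₂.1 - b₁.1) * (c₂.1 - c₁.1) *
  cross (a₂ - a₁) (b₂ - b₁) * cross (a₂ - a₁) (c₂ - c₁) *
  (cross (a₂ - a₁) (b₂ - b₁) * cross (c₂ - c₁) (a₁ - c₁) +
    cross (b₁ - a₁) (b₂ - b₁) * cross (c₂ - c₁) (a₂ - a₁))

lemma mem_lineThrough_of_cross {p q x : ℝ × ℝ} (h : q.1 - p.1 ≠ 0)
    (hc : cross (q - p) (x - p) = 0) : x ∈ lineThrough p q := by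
  refine ⟨(x.1 - p.1) / (q.1 - p.1), ?_⟩
  simp only [cross, Prod.fst_sub, Prod.snd_sub] at hc
  ext
  · simp only [Prod.fst_add, Prod.smul_fst, smul_eq_mul, Prod.fst_sub]
    field_simp
    ring
  · simp only [Prod.snd_add, Prod.smul_snd, smul_eq_mul, Prod.snd_sub]
    field_simp
    nlinarith [hc]

lemma cross_of_mem {p q x : ℝ × ℝ} (hx : x ∈ lineThrough p q) :
    cross (q - p) (x - p) = 0 := by
  obtain ⟨t, rfl⟩ := hx
  simp only [cross, Prod.fst_sub, Prod.snd_sub, Prod.fst_add, Prod.snd_add,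
    Prod.smul_fst, Prod.smul_snd, smul_eq_mul]
  ring

lemma Eexpr_eq_zero_iff (a₁ a₂ b₁ b₂ c₁ c₂ : ℝ × ℝ) :
    Eexpr a₁ a₂ b₁ b₂ c₁ c₂ = 0 ↔ IsDegenerate a₁ a₂ b₁ b₂ c₁ c₂ := by
  constructor
  · intro hE
    by_cases h1 : a₂.1 - a₁.1 = 0
    · exact Or.inl (by linarith)
    by_cases h2 : b₂.1 - b₁.1 = 0
    · exact Or.inr (Or.inl (by linarith))
    by_cases h3 : c₂.1 - c₁.1 = 0
    · exact Or.inr (Or.inr (Or.inl (by linarith)))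
    by_cases h4 : cross (a₂ - a₁) (b₂ - b₁) = 0
    · exact Or.inr (Or.inr (Or.inr (Or.inl h4)))
    by_cases h5 : cross (a₂ - a₁) (c₂ - c₁) = 0
    · exact Or.inr (Or.inr (Or.inr (Or.inr (Or.inl h5))))
    -- concurrency case
    have hD : cross (a₂ - a₁) (b₂ - b₁) * cross (c₂ - c₁) (a₁ - c₁) +
        cross (b₁ - a₁) (b₂ - b₁) * cross (c₂ - c₁) (a₂ - a₁) = 0 := by
      unfold Eexpr at hE
      rcases mul_eq_zero.1 hE with h | h
      · exfalso
        rcases mul_eq_zero.1 h with h | h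
        · rcases mul_eq_zero.1 h with h | h
          · rcases mul_eq_zero.1 h with h | h
            · rcases mul_eq_zero.1 h with h | h
              · exact h1 h
              · exact h2 h
            · exact h3 h
          · exact h4 h
        · exact h5 h
      · exact h
    set t : ℝ := cross (b₁ - a₁) (b₂ - b₁) / cross (a₂ - a₁) (b₂ - b₁) with ht
    set p : ℝ × ℝ := a₁ + t • (a₂ - a₁) with hp
    have hp1 : p.1 = a₁.1 + t * (a₂.1 - a₁.1) := by simp [hp]
    have hp2 : p.2 = a₁.2 + t * (a₂.2 - a₁.2) := by simp [hp]
    refine Or.inr (Or.inr (Or.inr (Or.inr (Or.inr ⟨p, ⟨t, rfl⟩, ?_, ?_⟩))))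
    · refine mem_lineThrough_of_cross h2 ?_
      simp only [cross, Prod.fst_sub, Prod.snd_sub] at h4 ⊢
      rw [hp1, hp2, ht]
      simp only [cross, Prod.fst_sub, Prod.snd_sub]
      rw [div_mul_eq_mul_div, div_mul_eq_mul_div, add_div' _ _ _ h4, add_div' _ _ _ h4,
        div_sub' h4, div_sub' h4, mul_div_assoc', mul_div_assoc', div_sub_div_same, div_eq_zero_iff]
      left
      ring
    · refine mem_lineThrough_of_cross h3 ?_
      have key : cross (a₂ - a₁) (b₂ - b₁) * cross (c₂ - c₁) (p - c₁) =
          cross (a₂ - a₁) (b₂ - b₁) * cross (c₂ - c₁) (a₁ - c₁) +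
          cross (b₁ - a₁) (b₂ - b₁) * cross (c₂ - c₁) (a₂ - a₁) := by
        simp only [cross, Prod.fst_sub, Prod.snd_sub] at h4 ⊢
        rw [hp1, hp2, ht]
        simp only [cross, Prod.fst_sub, Prod.snd_sub]
        field_simp
        ring
      have := key.trans hD
      rcases mul_eq_zero.1 this with h | h
      · exact absurd h h4
      · exact h
  · intro hd
    unfold Eexpr
    rcases hd with h | h | h | h | h | ⟨p, hA, hB, hC⟩
    · simp [show a₂.1 - a₁.1 = 0 by rw [h]; exact sub_self _]
    · simp [show b₂.1 - b₁.1 = 0 by rw [h]; exact sub_self _]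
    · simp [show c₂.1 - c₁.1 = 0 by rw [h]; exact sub_self _]
    · simp [h]
    · simp [h]
    · by_cases h4 : cross (a₂ - a₁) (b₂ - b₁) = 0
      · simp [h4]
      obtain ⟨s, hs⟩ := hA
      have hB' := cross_of_mem hB
      have hC' := cross_of_mem hC
      have hD : cross (a₂ - a₁) (b₂ - b₁) * cross (c₂ - c₁) (a₁ - c₁) +
          cross (b₁ - a₁) (b₂ - b₁) * cross (c₂ - c₁) (a₂ - a₁) = 0 := by
        have hp1 : p.1 = a₁.1 + s * (a₂.1 - a₁.1) := by rw [hs]; simp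
        have hp2 : p.2 = a₁.2 + s * (a₂.2 - a₁.2) := by rw [hs]; simp
        simp only [cross, Prod.fst_sub, Prod.snd_sub, hp1, hp2] at hB' hC' h4 ⊢
        linear_combination ((a₂.1-a₁.1)*(b₂.2-b₁.2) - (a₂.2-a₁.2)*(b₂.1-b₁.1)) * hC' +
          ((c₂.1-c₁.1)*(a₂.2-a₁.2) - (c₂.2-c₁.2)*(a₂.1-a₁.1)) * hB'
      simp [hD]

lemma sextType_eq_zero_iff (a₁ a₂ b₁ b₂ c₁ c₂ : ℝ × ℝ) :
    sextType a₁ a₂ b₁ b₂ c₁ c₂ = 0 ↔ IsDegenerate a₁ a₂ b₁ b₂ c₁ c₂ := by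
  unfold sextType
  split_ifs with h h2 <;> simp_all

open MvPolynomial in
/-- The per-sextuple polynomial. -/
noncomputable def qpoly {n : ℕ} (i₁ i₂ j₁ j₂ k₁ k₂ : Fin n) :
    MvPolynomial (Fin n × Fin 2) ℝ :=
  let x : Fin n → MvPolynomial (Fin n × Fin 2) ℝ := fun i => X (i, 0)
  let y : Fin n → MvPolynomial (Fin n × Fin 2) ℝ := fun i => X (i, 1)
  let cAB := (x i₂ - x i₁) * (y j₂ - y j₁) - (y i₂ - y i₁) * (x j₂ - x j₁)
  let cAC := (x i₂ - x i₁) * (y k₂ - y k₁) - (y i₂ - y i₁) * (x k₂ - x k₁)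
  let D := cAB * ((x k₂ - x k₁) * (y i₁ - y k₁) - (y k₂ - y k₁) * (x i₁ - x k₁)) +
    ((x j₁ - x i₁) * (y j₂ - y j₁) - (y j₁ - y i₁) * (x j₂ - x j₁)) *
      ((x k₂ - x k₁) * (y i₂ - y i₁) - (y k₂ - y k₁) * (x i₂ - x i₁))
  (x i₂ - x i₁) * (x j₂ - x j₁) * (x k₂ - x k₁) * cAB * cAC * D

lemma qpoly_eval {n : ℕ} (i₁ i₂ j₁ j₂ k₁ k₂ : Fin n) (P : Fin n → ℝ × ℝ) :
    MvPolynomial.eval (fun v : Fin n × Fin 2 => if v.2 = 0 then (P v.1).1 else (P v.1).2)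
      (qpoly i₁ i₂ j₁ j₂ k₁ k₂) =
    Eexpr (P i₁) (P i₂) (P j₁) (P j₂) (P k₁) (P k₂) := by
  simp only [qpoly, Eexpr, cross, Prod.fst_sub, Prod.snd_sub, map_sub, map_add, map_mul,
    MvPolynomial.eval_X]
  norm_num

lemma qpoly_totalDegree {n : ℕ} (i₁ i₂ j₁ j₂ k₁ k₂ : Fin n) :
    (qpoly i₁ i₂ j₁ j₂ k₁ k₂).totalDegree ≤ 11 := by
  have hX : ∀ a b : Fin n × Fin 2,
      ((MvPolynomial.X a - MvPolynomial.X b : MvPolynomial (Fin n × Fin 2) ℝ)).totalDegree ≤ 1 := by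
    intro a b
    refine le_trans (MvPolynomial.totalDegree_sub _ _) ?_
    simp [MvPolynomial.totalDegree_X]
  have hM : ∀ (p q : MvPolynomial (Fin n × Fin 2) ℝ) (dp dq : ℕ),
      p.totalDegree ≤ dp → q.totalDegree ≤ dq → (p * q).totalDegree ≤ dp + dq := by
    intro p q dp dq hp hq
    exact le_trans (MvPolynomial.totalDegree_mul _ _) (add_le_add hp hq)
  have h2 : ∀ a b c d : Fin n × Fin 2,
      ((MvPolynomial.X a - MvPolynomial.X b) * (MvPolynomial.X c - MvPolynomial.X d) :
        MvPolynomial (Fin n × Fin 2) ℝ).totalDegree ≤ 2 := fun a b c d =>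
    hM _ _ 1 1 (hX a b) (hX c d)
  have hC : ∀ a b c d e f g h : Fin n × Fin 2,
      ((MvPolynomial.X a - MvPolynomial.X b) * (MvPolynomial.X c - MvPolynomial.X d) -
        (MvPolynomial.X e - MvPolynomial.X f) * (MvPolynomial.X g - MvPolynomial.X h) :
        MvPolynomial (Fin n × Fin 2) ℝ).totalDegree ≤ 2 := by
    intro a b c d e f g h
    refine le_trans (MvPolynomial.totalDegree_sub _ _) ?_
    simp only [max_le_iff]
    exact ⟨h2 a b c d, h2 e f g h⟩
  unfold qpoly
  simp only []
  refine hM _ _ 7 4 (hM _ _ 5 2 (hM _ _ 3 2 (hM _ _ 2 1 (hM _ _ 1 1 (hX _ _) (hX _ _)) (hX _ _)) (hC _ _ _ _ _ _ _ _)) (hC _ _ _ _ _ _ _ _)) ?_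
  refine le_trans (MvPolynomial.totalDegree_add _ _) ?_
  simp only [max_le_iff]
  exact ⟨hM _ _ 2 2 (hC _ _ _ _ _ _ _ _) (hC _ _ _ _ _ _ _ _),
    hM _ _ 2 2 (hC _ _ _ _ _ _ _ _) (hC _ _ _ _ _ _ _ _)⟩

/-- There is a constant `C > 0` such that for every `n ≥ 2` there is a polynomial
`P*` in `2n` real variables of total degree at most `C·n⁶` such that a sequence of
`n` pairwise distinct points is non-simple (its super-order type contains a zero)
iff `P*` vanishes at the corresponding point of `ℝ^(2n)`. -/
theorem non_simple_sequences_are_zero_set_of_polynomial :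
    ∃ C : ℝ, 0 < C ∧ ∀ n : ℕ, 2 ≤ n →
      ∃ Pstar : MvPolynomial (Fin n × Fin 2) ℝ,
        (Pstar.totalDegree : ℝ) ≤ C * (n : ℝ) ^ 6 ∧
        ∀ P : Fin n → ℝ × ℝ, Function.Injective P →
          ((∃ i₁ i₂ j₁ j₂ k₁ k₂ : Fin n, AdmissibleIdx i₁ i₂ j₁ j₂ k₁ k₂ ∧
              sextType (P i₁) (P i₂) (P j₁) (P j₂) (P k₁) (P k₂) = 0) ↔
            MvPolynomial.eval
              (fun v : Fin n × Fin 2 => if v.2 = 0 then (P v.1).1 else (P v.1).2)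
              Pstar = 0) := by
  classical
  refine ⟨11, by norm_num, fun n hn => ?_⟩
  set S : Finset (Fin n × Fin n × Fin n × Fin n × Fin n × Fin n) :=
    Finset.univ.filter
      (fun t => AdmissibleIdx t.1 t.2.1 t.2.2.1 t.2.2.2.1 t.2.2.2.2.1 t.2.2.2.2.2) with hS
  refine ⟨∏ t ∈ S, qpoly t.1 t.2.1 t.2.2.1 t.2.2.2.1 t.2.2.2.2.1 t.2.2.2.2.2, ?_, ?_⟩
  · have h1 : (∏ t ∈ S, qpoly t.1 t.2.1 t.2.2.1 t.2.2.2.1 t.2.2.2.2.1 t.2.2.2.2.2).totalDegree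
        ≤ ∑ t ∈ S, (qpoly t.1 t.2.1 t.2.2.1 t.2.2.2.1 t.2.2.2.2.1 t.2.2.2.2.2).totalDegree :=
      MvPolynomial.totalDegree_finset_prod _ _
    have h2 : ∑ t ∈ S, (qpoly t.1 t.2.1 t.2.2.1 t.2.2.2.1 t.2.2.2.2.1 t.2.2.2.2.2).totalDegree
        ≤ ∑ _t ∈ S, 11 :=
      Finset.sum_le_sum fun t _ => qpoly_totalDegree _ _ _ _ _ _
    have h3 : S.card ≤ n ^ 6 := by
      have := Finset.card_le_univ S
      simpa [Fintype.card_prod, Fintype.card_fin, pow_succ, mul_assoc] using this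
    have h4 : (∏ t ∈ S, qpoly t.1 t.2.1 t.2.2.1 t.2.2.2.1 t.2.2.2.2.1 t.2.2.2.2.2).totalDegree
        ≤ 11 * n ^ 6 := by
      refine le_trans h1 (le_trans h2 ?_)
      simp only [Finset.sum_const, smul_eq_mul]
      calc S.card * 11 ≤ n ^ 6 * 11 := Nat.mul_le_mul_right _ h3
        _ = 11 * n ^ 6 := by ring
    calc ((∏ t ∈ S, qpoly t.1 t.2.1 t.2.2.1 t.2.2.2.1 t.2.2.2.2.1 t.2.2.2.2.2).totalDegree : ℝ)
        ≤ ((11 * n ^ 6 : ℕ) : ℝ) := by exact_mod_cast h4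
      _ = 11 * (n : ℝ) ^ 6 := by push_cast; ring
  · intro P hP
    rw [map_prod, Finset.prod_eq_zero_iff]
    constructor
    · rintro ⟨i₁, i₂, j₁, j₂, k₁, k₂, hadm, hzero⟩
      refine ⟨(i₁, i₂, j₁, j₂, k₁, k₂), ?_, ?_⟩
      · simp [hS, hadm]
      · rw [qpoly_eval]
        exact (Eexpr_eq_zero_iff _ _ _ _ _ _).2 ((sextType_eq_zero_iff _ _ _ _ _ _).1 hzero)
    · rintro ⟨t, ht, h0⟩
      have hadm : AdmissibleIdx t.1 t.2.1 t.2.2.1 t.2.2.2.1 t.2.2.2.2.1 t.2.2.2.2.2 := by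
        rw [hS, Finset.mem_filter] at ht
        exact ht.2
      refine ⟨t.1, t.2.1, t.2.2.1, t.2.2.2.1, t.2.2.2.2.1, t.2.2.2.2.2, hadm, ?_⟩
      rw [sextType_eq_zero_iff]
      rw [qpoly_eval] at h0
      exact (Eexpr_eq_zero_iff _ _ _ _ _ _).1 h0
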